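/- Let (Ω,F,P) be atomless and α ∈ [0,1). For every X with P(X < 0) ≤ 1-α, there exists a sequence (X_k) of random variables with P(X_k < 0) < 1-α for each k such that X_k → X in probability. Consequently, the closure of A^-_α = {X : P(X < 0) < 1-α} under convergence in probability is A^+_α = {X : P(X < 0) ≤ 1-α}. -/

import Mathlib

open MeasureTheory
open scoped ENNReal

variable {Ω : Type*} [MeasurableSpace Ω]

private lemma key_lemma (μ : Measure Ω) [IsProbabilityMeasure μ]
    (U : Ω → ℝ) (hU : Measurable U)
    (hUd : μ.map U = volume.restrict (Set.Icc (0 : ℝ) 1))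
    {β : ℝ≥0∞} (hβ : 0 < β)
    (X : Ω → ℝ) (hX : Measurable X) (hle : μ {ω | X ω < 0} ≤ β) :
    ∃ Xk : ℕ → Ω → ℝ,
      (∀ k, Measurable (Xk k) ∧ μ {ω | Xk k ω < 0} < β) ∧
      TendstoInMeasure μ Xk Filter.atTop X := by
  rcases lt_or_eq_of_le hle with hlt | hS
  · refine ⟨fun _ => X, fun k => ⟨hX, hlt⟩, ?_⟩
    intro ε hε
    have h0 : {x : Ω | ε ≤ edist (X x) (X x)} = (∅ : Set Ω) := by
      rw [Set.eq_empty_iff_forall_notMem]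
      intro x hx
      simp only [Set.mem_setOf_eq, edist_self] at hx
      exact (not_le.2 hε) hx
    have h1 : (fun _ : ℕ => μ {x | ε ≤ edist (X x) (X x)}) = fun _ : ℕ => (0:ℝ≥0∞) :=
      funext fun k => by rw [h0, measure_empty]
    rw [h1]
    exact tendsto_const_nhds
  · set S : Set Ω := {ω | X ω < 0} with hSdef
    have hSm : MeasurableSet S := measurableSet_lt hX measurable_const
    set f : ℝ → ℝ≥0∞ := fun t => μ (S ∩ {ω | U ω ≤ t}) with hfdef
    have hUIic : ∀ t : ℝ, μ {ω | U ω ≤ t} = volume (Set.Iic t ∩ Set.Icc (0:ℝ) 1) := by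
      intro t
      have h1 : μ {ω | U ω ≤ t} = μ.map U (Set.Iic t) := by
        rw [Measure.map_apply hU measurableSet_Iic]; rfl
      rw [h1, hUd, Measure.restrict_apply measurableSet_Iic]
    have hUIoc : ∀ s t : ℝ, μ {ω | U ω ∈ Set.Ioc s t} ≤ ENNReal.ofReal (t - s) := by
      intro s t
      have h1 : μ {ω | U ω ∈ Set.Ioc s t} = μ.map U (Set.Ioc s t) := by
        rw [Measure.map_apply hU measurableSet_Ioc]; rfl
      rw [h1, hUd, Measure.restrict_apply measurableSet_Ioc]
      calc volume (Set.Ioc s t ∩ Set.Icc 0 1) ≤ volume (Set.Ioc s t) :=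
            measure_mono Set.inter_subset_left
        _ = ENNReal.ofReal (t - s) := Real.volume_Ioc
    have hfmono : Monotone f := by
      intro s t hst
      exact measure_mono (fun ω hω => ⟨hω.1, le_trans hω.2 hst⟩)
    have hflip : ∀ s t : ℝ, s ≤ t → f t ≤ f s + ENNReal.ofReal (t - s) := by
      intro s t hst
      have hsub : S ∩ {ω | U ω ≤ t} ⊆ (S ∩ {ω | U ω ≤ s}) ∪ {ω | U ω ∈ Set.Ioc s t} := by
        rintro ω ⟨h1, h2⟩
        by_cases h : U ω ≤ s
        · exact Or.inl ⟨h1, h⟩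
        · exact Or.inr ⟨lt_of_not_ge h, h2⟩
      calc f t ≤ μ (S ∩ {ω | U ω ≤ s}) + μ {ω | U ω ∈ Set.Ioc s t} :=
            le_trans (measure_mono hsub) (measure_union_le _ _)
        _ ≤ f s + ENNReal.ofReal (t - s) := by
            exact add_le_add le_rfl (hUIoc s t)
    have hneg : f (-1) = 0 := by
      refine measure_mono_null Set.inter_subset_right ?_
      rw [hUIic]
      have he : Set.Iic (-1:ℝ) ∩ Set.Icc 0 1 = ∅ := by
        rw [Set.eq_empty_iff_forall_notMem]
        rintro x ⟨h1, h2, h3⟩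
        simp only [Set.mem_Iic] at h1
        linarith
      rw [he, measure_empty]
    have hgt2 : μ {ω | 2 < U ω} = 0 := by
      have h1 : μ {ω | 2 < U ω} = μ.map U (Set.Ioi 2) := by
        rw [Measure.map_apply hU measurableSet_Ioi]; rfl
      rw [h1, hUd, Measure.restrict_apply measurableSet_Ioi]
      have he : Set.Ioi (2:ℝ) ∩ Set.Icc 0 1 = ∅ := by
        rw [Set.eq_empty_iff_forall_notMem]
        rintro x ⟨h1, h2, h3⟩
        simp only [Set.mem_Ioi] at h1
        linarith
      rw [he, measure_empty]
    have hf2 : β ≤ f 2 := by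
      have hsub : S ⊆ (S ∩ {ω | U ω ≤ 2}) ∪ {ω | 2 < U ω} := by
        intro ω h
        by_cases hc : U ω ≤ 2
        · exact Or.inl ⟨h, hc⟩
        · exact Or.inr (lt_of_not_ge hc)
      calc β = μ S := hS.symm
        _ ≤ μ ((S ∩ {ω | U ω ≤ 2}) ∪ {ω | 2 < U ω}) := measure_mono hsub
        _ ≤ f 2 + μ {ω | 2 < U ω} := measure_union_le _ _
        _ = f 2 := by rw [hgt2, add_zero]
    set Z : Set ℝ := {t | f t = 0} with hZdef
    have hZne : (-1 : ℝ) ∈ Z := hneg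
    have hZub : ∀ z ∈ Z, z ≤ 2 := by
      intro z hz
      by_contra h
      have h2 : f 2 = 0 := le_antisymm (hz ▸ hfmono (le_of_lt (lt_of_not_ge h))) zero_le
      have : β = 0 := le_antisymm (h2 ▸ hf2) zero_le
      exact hβ.ne' this
    have hZbdd : BddAbove Z := ⟨2, fun z hz => hZub z hz⟩
    set t₀ : ℝ := sSup Z with ht0def
    have hft0 : f t₀ = 0 := by
      have hbd : ∀ ε : ℝ, 0 < ε → (f t₀).toReal ≤ ε := by
        intro ε hε
        obtain ⟨z, hzZ, hz⟩ := exists_lt_of_lt_csSup ⟨-1, hZne⟩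
          (show t₀ - ε < sSup Z by rw [← ht0def]; linarith)
        have hzle : z ≤ t₀ := le_csSup hZbdd hzZ
        have h1 : f t₀ ≤ ENNReal.ofReal (t₀ - z) := by
          have := hflip z t₀ hzle
          rwa [hzZ, zero_add] at this
        have h2 : f t₀ ≤ ENNReal.ofReal ε :=
          le_trans h1 (ENNReal.ofReal_le_ofReal (by linarith))
        exact ENNReal.toReal_le_of_le_ofReal hε.le h2
      have htr : (f t₀).toReal = 0 := by
        have h1 : (f t₀).toReal ≤ 0 := le_of_forall_pos_le_add (by
          intro ε hε
          simpa using hbd ε hε)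
        linarith [ENNReal.toReal_nonneg (a := f t₀)]
      rcases (ENNReal.toReal_eq_zero_iff _).1 htr with h | h
      · exact h
      · exact absurd h (measure_ne_top μ _)
    have htk : ∀ k : ℕ, (0:ℝ) < 1 / (k + 1) := fun k => by positivity
    set A : ℕ → Set Ω := fun k => S ∩ {ω | U ω ≤ t₀ + 1 / (k + 1)} with hAdef
    have hAm : ∀ k, MeasurableSet (A k) := fun k => hSm.inter (hU measurableSet_Iic)
    have hApos : ∀ k, μ (A k) ≠ 0 := by
      intro k h
      have hmem : t₀ + 1 / (k + 1) ∈ Z := h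
      have := le_csSup hZbdd hmem
      rw [← ht0def] at this
      linarith [htk k]
    have hAsmall : ∀ k, μ (A k) ≤ ENNReal.ofReal (1 / (k + 1)) := by
      intro k
      have := hflip t₀ (t₀ + 1 / (k + 1)) (by linarith [htk k])
      rwa [hft0, zero_add, add_sub_cancel_left] at this
    refine ⟨fun k => (A k).piecewise (fun _ => (0:ℝ)) X, ?_, ?_⟩
    · intro k
      refine ⟨Measurable.piecewise (hAm k) measurable_const hX, ?_⟩
      have hset : {ω | (A k).piecewise (fun _ => (0:ℝ)) X ω < 0} = S \ A k := by
        ext ω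
        constructor
        · intro hω
          by_cases h : ω ∈ A k
          · rw [Set.mem_setOf_eq, Set.piecewise_eq_of_mem _ _ _ h] at hω
            exact absurd hω (lt_irrefl (0:ℝ))
          · rw [Set.mem_setOf_eq, Set.piecewise_eq_of_notMem _ _ _ h] at hω
            exact ⟨hω, h⟩
        · rintro ⟨h1, h2⟩
          show (A k).piecewise (fun _ => (0:ℝ)) X ω < 0
          rw [Set.piecewise_eq_of_notMem _ _ _ h2]
          exact h1
      rw [hset, measure_diff Set.inter_subset_left (hAm k).nullMeasurableSet
        (measure_ne_top μ _), ← hS]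
      exact ENNReal.sub_lt_self (measure_ne_top μ _) (by rw [hS]; exact hβ.ne') (hApos k)
    · intro ε hε
      have hub : ∀ k : ℕ, μ {ω | ε ≤ edist ((A k).piecewise (fun _ => (0:ℝ)) X ω) (X ω)}
          ≤ ENNReal.ofReal (1 / (k + 1)) := by
        intro k
        refine le_trans (measure_mono ?_) (hAsmall k)
        intro ω hω
        by_contra h
        simp only [Set.mem_setOf_eq, Set.piecewise, h, if_false, edist_self] at hω
        exact (not_le.2 hε) hω
      refine tendsto_of_tendsto_of_tendsto_of_le_of_le tendsto_const_nhds ?_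
        (fun k => zero_le) hub
      have : Filter.Tendsto (fun k : ℕ => ENNReal.ofReal (1 / (k + 1))) Filter.atTop
          (nhds (ENNReal.ofReal 0)) :=
        ENNReal.tendsto_ofReal tendsto_one_div_add_atTop_nhds_zero_nat
      simpa using this

/-- On an atomless probability space (one supporting a uniformly distributed random
variable `U`), every member of `A⁺_α` is the limit in probability of a sequence from
`A⁻_α`; consequently the closure of `A⁻_α` under convergence in probability is `A⁺_α`. -/
theorem stmt_14 (μ : Measure Ω) [IsProbabilityMeasure μ]
    (U : Ω → ℝ) (hU : Measurable U)
    (hUd : μ.map U = volume.restrict (Set.Icc (0 : ℝ) 1))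
    (α : ℝ) (hα : α ∈ Set.Ico (0 : ℝ) 1) :
    (∀ X : Ω → ℝ, Measurable X → (μ {ω | X ω < 0}).toReal ≤ 1 - α →
      ∃ Xk : ℕ → Ω → ℝ,
        (∀ k, Measurable (Xk k) ∧ (μ {ω | Xk k ω < 0}).toReal < 1 - α) ∧
        TendstoInMeasure μ Xk Filter.atTop X) ∧
    ({X : Ω → ℝ | Measurable X ∧ ∃ Xk : ℕ → Ω → ℝ,
        (∀ k, Measurable (Xk k) ∧ (μ {ω | Xk k ω < 0}).toReal < 1 - α) ∧
        TendstoInMeasure μ Xk Filter.atTop X}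
      = {X : Ω → ℝ | Measurable X ∧ (μ {ω | X ω < 0}).toReal ≤ 1 - α}) := by
  have hα1 : (0:ℝ) < 1 - α := by linarith [hα.2]
  set β : ℝ≥0∞ := ENNReal.ofReal (1 - α) with hβdef
  have hβpos : 0 < β := ENNReal.ofReal_pos.2 hα1
  -- conversions
  have hconv_le : ∀ s : Set Ω, ((μ s).toReal ≤ 1 - α ↔ μ s ≤ β) := fun s =>
    (ENNReal.le_ofReal_iff_toReal_le (measure_ne_top μ s) hα1.le).symm
  have hconv_lt : ∀ s : Set Ω, ((μ s).toReal < 1 - α ↔ μ s < β) := fun s =>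
    (ENNReal.lt_ofReal_iff_toReal_lt (measure_ne_top μ s)).symm
  have part1 : ∀ X : Ω → ℝ, Measurable X → (μ {ω | X ω < 0}).toReal ≤ 1 - α →
      ∃ Xk : ℕ → Ω → ℝ,
        (∀ k, Measurable (Xk k) ∧ (μ {ω | Xk k ω < 0}).toReal < 1 - α) ∧
        TendstoInMeasure μ Xk Filter.atTop X := by
    intro X hX hle
    obtain ⟨Xk, hk, htend⟩ := key_lemma μ U hU hUd hβpos X hX ((hconv_le _).1 hle)
    exact ⟨Xk, fun k => ⟨(hk k).1, (hconv_lt _).2 (hk k).2⟩, htend⟩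
  refine ⟨part1, ?_⟩
  ext X
  simp only [Set.mem_setOf_eq]
  constructor
  · rintro ⟨hX, Xk, hk, htend⟩
    refine ⟨hX, (hconv_le _).2 ?_⟩
    -- closedness direction
    set s : ℕ → Set Ω := fun n => {ω | X ω < -(1 / (n + 1))} with hsdef
    have hsm : Monotone s := by
      intro n m hnm ω hω
      have hω' : X ω < -(1 / ((n:ℝ) + 1)) := hω
      have h1 : (1:ℝ) / (m + 1) ≤ 1 / (n + 1) := by
        apply one_div_le_one_div_of_le
        · positivity
        · exact_mod_cast Nat.add_le_add_right hnm 1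
      show X ω < -(1 / ((m:ℝ) + 1))
      linarith
    have hsU : ⋃ n, s n = {ω | X ω < 0} := by
      ext ω
      simp only [Set.mem_iUnion, Set.mem_setOf_eq]
      constructor
      · rintro ⟨n, hn⟩
        have hn' : X ω < -(1 / ((n:ℝ) + 1)) := hn
        have : (0:ℝ) < 1 / (n + 1) := by positivity
        linarith
      · intro h
        obtain ⟨n, hn⟩ := exists_nat_one_div_lt (show (0:ℝ) < -X ω by linarith)
        exact ⟨n, show X ω < -(1 / ((n:ℝ) + 1)) by linarith⟩
    have hlim : Filter.Tendsto (fun n => μ (s n)) Filter.atTop (nhds (μ (⋃ n, s n))) :=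
      tendsto_measure_iUnion_atTop hsm
    rw [← hsU]
    refine le_of_tendsto hlim (Filter.Eventually.of_forall ?_)
    intro n
    -- μ (s n) ≤ β
    have hεpos : (0:ℝ) < 1 / (n + 1) := by positivity
    have hbound : ∀ k : ℕ, μ (s n) ≤ β + μ {ω | 1 / (n + 1) ≤ dist (Xk k ω) (X ω)} := by
      intro k
      have hsub : s n ⊆ {ω | Xk k ω < 0} ∪ {ω | 1 / (n + 1) ≤ dist (Xk k ω) (X ω)} := by
        intro ω hω
        have hω' : X ω < -(1 / ((n:ℝ) + 1)) := hω
        by_cases h : 1 / ((n:ℝ) + 1) ≤ dist (Xk k ω) (X ω)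
        · exact Or.inr h
        · left
          have h2 : |Xk k ω - X ω| < 1 / (n + 1) := by
            rw [← Real.dist_eq]; exact lt_of_not_ge h
          have h3 := (abs_lt.1 h2).2
          show Xk k ω < 0
          linarith
      calc μ (s n) ≤ μ ({ω | Xk k ω < 0} ∪ {ω | 1 / (n + 1) ≤ dist (Xk k ω) (X ω)}) :=
            measure_mono hsub
        _ ≤ μ {ω | Xk k ω < 0} + μ {ω | 1 / (n + 1) ≤ dist (Xk k ω) (X ω)} :=
            measure_union_le _ _
        _ ≤ β + μ {ω | 1 / (n + 1) ≤ dist (Xk k ω) (X ω)} :=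
            add_le_add (((hconv_lt _).1 (hk k).2).le) le_rfl
    have htend2 : Filter.Tendsto
        (fun k => β + μ {ω | 1 / (n + 1) ≤ dist (Xk k ω) (X ω)}) Filter.atTop
        (nhds (β + 0)) :=
      Filter.Tendsto.const_add β (by
        have h := htend (ENNReal.ofReal (1 / (n + 1))) (ENNReal.ofReal_pos.2 hεpos)
        simpa only [edist_dist, ENNReal.ofReal_le_ofReal_iff dist_nonneg] using h)
    have := ge_of_tendsto' htend2 (fun k => hbound k)
    rwa [add_zero] at this
  · rintro ⟨hX, hle⟩
    exact ⟨hX, part1 X hX hle⟩
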